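/- arXiv:1904.04664 — 4 statements merged into one kernel-verified Lean document; each statement's English description precedes it below -/
import Mathlib

section
/- Let β̂ be a stationary point of the SLS-GLE objective F(β) = (1/2)‖y − Xβ‖₂² + λ₁‖β‖₁ + (λ₂/2)Σ_{j<j'} |θ_{jj'}|(β_j − sign(θ_{jj'})β_{j'})², with β̂_j ≠ 0 and β̂_{j'} ≠ 0. Suppose θ_{jj'} > 0, sign(β̂_j) = sign(β̂_{j'}), and θ_{jk} = θ_{j'k} for all k ∉ {j, j'}. Then with z = y − Xβ̂: |β̂_j − β̂_{j'}| = |(X_j − X_{j'})^T z| / (λ₂(Σ_{k≠j}|θ_{jk}| + θ_{jj'})). -/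
open Finset Matrix

/-- Grouping effect of SLS-GLE (positive conditional dependence): at a stationary point
`b` of the SLS-GLE objective, if `θ_{jj'} > 0`, `sign(b_j) = sign(b_{j'})` and
`θ_{jk} = θ_{j'k}` for `k ∉ {j, j'}`, then with `z = y - Xb`,
`|b_j - b_{j'}| = |(X_j - X_{j'})ᵀ z| / (λ₂(∑_{k≠j}|θ_{jk}| + θ_{jj'}))`. -/
theorem slsgle_grouping_pos {n p : ℕ}
    (y : Fin n → ℝ) (X : Matrix (Fin n) (Fin p) ℝ)
    (Θ : Matrix (Fin p) (Fin p) ℝ) (hΘ : Θ.IsSymm)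
    (lam1 lam2 : ℝ) (hlam1 : 0 < lam1) (hlam2 : 0 < lam2)
    (b : Fin p → ℝ)
    (hKKT : ∀ l, b l ≠ 0 →
      -(∑ i, X i l * (y i - X.mulVec b i)) + lam1 * Real.sign (b l) +
        lam2 * b l * (∑ k ∈ Finset.univ.filter (fun k => k ≠ l), |Θ l k|) -
        lam2 * (∑ k ∈ Finset.univ.filter (fun k => k ≠ l), Θ l k * b k) = 0)
    (j j' : Fin p) (hne : j ≠ j') (hbj : b j ≠ 0) (hbj' : b j' ≠ 0)
    (hpos : 0 < Θ j j') (hsign : Real.sign (b j) = Real.sign (b j'))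
    (hrepl : ∀ k, k ≠ j → k ≠ j' → Θ j k = Θ j' k) :
    |b j - b j'| =
      |∑ i, (X i j - X i j') * (y i - X.mulVec b i)| /
        (lam2 * ((∑ k ∈ Finset.univ.filter (fun k => k ≠ j), |Θ j k|) + Θ j j')) := by
  classical
  set U : Finset (Fin p) := Finset.univ.filter (fun k => k ≠ j ∧ k ≠ j') with hU
  have hjU : j ∉ U := by simp [hU]
  have hj'U : j' ∉ U := by simp [hU]
  have hfj : Finset.univ.filter (fun k => k ≠ j) = insert j' U := by
    ext k
    simp only [Finset.mem_filter, Finset.mem_univ, true_and, Finset.mem_insert, hU]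
    constructor
    · intro hk; by_cases h : k = j' <;> tauto
    · rintro (rfl | ⟨h1, h2⟩)
      · exact hne.symm
      · exact h1
  have hfj' : Finset.univ.filter (fun k => k ≠ j') = insert j U := by
    ext k
    simp only [Finset.mem_filter, Finset.mem_univ, true_and, Finset.mem_insert, hU]
    constructor
    · intro hk; by_cases h : k = j <;> tauto
    · rintro (rfl | ⟨h1, h2⟩)
      · exact hne
      · exact h2
  have hsym : Θ j' j = Θ j j' := hΘ.apply j j'
  have hS : (∑ k ∈ Finset.univ.filter (fun k => k ≠ j), |Θ j k|)
      = ∑ k ∈ Finset.univ.filter (fun k => k ≠ j'), |Θ j' k| := by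
    rw [hfj, hfj', Finset.sum_insert hj'U, Finset.sum_insert hjU, hsym]
    congr 1
    refine Finset.sum_congr rfl fun k hk => ?_
    simp only [hU, Finset.mem_filter, Finset.mem_univ, true_and] at hk
    rw [hrepl k hk.1 hk.2]
  have hT : (∑ k ∈ Finset.univ.filter (fun k => k ≠ j), Θ j k * b k)
      - (∑ k ∈ Finset.univ.filter (fun k => k ≠ j'), Θ j' k * b k)
      = Θ j j' * (b j' - b j) := by
    rw [hfj, hfj', Finset.sum_insert hj'U, Finset.sum_insert hjU, hsym]
    have hUeq : (∑ k ∈ U, Θ j k * b k) = ∑ k ∈ U, Θ j' k * b k := by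
      refine Finset.sum_congr rfl fun k hk => ?_
      simp only [hU, Finset.mem_filter, Finset.mem_univ, true_and] at hk
      rw [hrepl k hk.1 hk.2]
    rw [hUeq]; ring
  have hA : (∑ i, X i j * (y i - X.mulVec b i)) - (∑ i, X i j' * (y i - X.mulVec b i))
      = ∑ i, (X i j - X i j') * (y i - X.mulVec b i) := by
    rw [← Finset.sum_sub_distrib]
    exact Finset.sum_congr rfl fun i _ => by ring
  have e1 := hKKT j hbj
  have e2 := hKKT j' hbj'
  have key : (b j - b j') * (lam2 * ((∑ k ∈ Finset.univ.filter (fun k => k ≠ j), |Θ j k|) + Θ j j'))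
      = ∑ i, (X i j - X i j') * (y i - X.mulVec b i) := by
    rw [← hA, hS]
    rw [hS, hsign] at e1
    linear_combination e1 - e2 + lam2 * hT
  have hD : 0 < lam2 * ((∑ k ∈ Finset.univ.filter (fun k => k ≠ j), |Θ j k|) + Θ j j') := by
    apply mul_pos hlam2
    have h0 : (0:ℝ) ≤ ∑ k ∈ Finset.univ.filter (fun k => k ≠ j), |Θ j k| :=
      Finset.sum_nonneg fun k _ => abs_nonneg _
    linarith
  have habs : |∑ i, (X i j - X i j') * (y i - X.mulVec b i)|
      = |b j - b j'| * (lam2 * ((∑ k ∈ Finset.univ.filter (fun k => k ≠ j), |Θ j k|) + Θ j j')) := by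
    rw [← key, abs_mul, abs_of_pos hD]
  rw [habs, mul_div_assoc, div_self hD.ne', mul_one]
end

section
/- Let β̂ be a stationary point of the SLS-GLE objective with β̂_j ≠ 0, β̂_{j'} ≠ 0, θ_{jj'} < 0, sign(β̂_j) = −sign(β̂_{j'}), and θ_{jk} = −θ_{j'k} for all k ∉ {j, j'}. Then with z = y − Xβ̂: |β̂_j + β̂_{j'}| = |(X_j + X_{j'})^T z| / (λ₂(Σ_{k≠j}|θ_{jk}| − θ_{jj'})). -/
open Finset Matrix

/-- Grouping effect of SLS-GLE (negative conditional dependence): at a stationary point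
`b` of the SLS-GLE objective, if `θ_{jj'} < 0`, `sign(b_j) = -sign(b_{j'})` and
`θ_{jk} = -θ_{j'k}` for `k ∉ {j, j'}`, then with `z = y - Xb`,
`|b_j + b_{j'}| = |(X_j + X_{j'})ᵀ z| / (λ₂(∑_{k≠j}|θ_{jk}| - θ_{jj'}))`. -/
theorem slsgle_grouping_neg {n p : ℕ}
    (y : Fin n → ℝ) (X : Matrix (Fin n) (Fin p) ℝ)
    (Θ : Matrix (Fin p) (Fin p) ℝ) (hΘ : Θ.IsSymm)
    (lam1 lam2 : ℝ) (hlam1 : 0 < lam1) (hlam2 : 0 < lam2)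
    (b : Fin p → ℝ)
    (hKKT : ∀ l, b l ≠ 0 →
      -(∑ i, X i l * (y i - X.mulVec b i)) + lam1 * Real.sign (b l) +
        lam2 * b l * (∑ k ∈ Finset.univ.filter (fun k => k ≠ l), |Θ l k|) -
        lam2 * (∑ k ∈ Finset.univ.filter (fun k => k ≠ l), Θ l k * b k) = 0)
    (j j' : Fin p) (hne : j ≠ j') (hbj : b j ≠ 0) (hbj' : b j' ≠ 0)
    (hneg : Θ j j' < 0) (hsign : Real.sign (b j) = -Real.sign (b j'))
    (hrepl : ∀ k, k ≠ j → k ≠ j' → Θ j k = -Θ j' k) :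
    |b j + b j'| =
      |∑ i, (X i j + X i j') * (y i - X.mulVec b i)| /
        (lam2 * ((∑ k ∈ Finset.univ.filter (fun k => k ≠ j), |Θ j k|) - Θ j j')) := by
  have hsym : Θ j' j = Θ j j' := by
    have := hΘ; rw [Matrix.IsSymm] at this
    calc Θ j' j = Θ.transpose j j' := rfl
    _ = Θ j j' := by rw [this]
  -- splitting lemma
  have split1 : ∀ (f : Fin p → ℝ),
      ∑ k ∈ Finset.univ.filter (fun k => k ≠ j), f k
        = f j' + ∑ k ∈ Finset.univ.filter (fun k => k ≠ j ∧ k ≠ j'), f k := by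
    intro f
    have hset : Finset.univ.filter (fun k : Fin p => k ≠ j)
        = insert j' (Finset.univ.filter (fun k => k ≠ j ∧ k ≠ j')) := by
      ext k; simp only [Finset.mem_filter, Finset.mem_insert, Finset.mem_univ, true_and]
      constructor
      · intro hk; by_cases h : k = j'
        · exact Or.inl h
        · exact Or.inr ⟨hk, h⟩
      · rintro (rfl | ⟨h1, _⟩)
        · exact hne.symm
        · exact h1
    rw [hset, Finset.sum_insert (by simp)]
  have split2 : ∀ (f : Fin p → ℝ),
      ∑ k ∈ Finset.univ.filter (fun k => k ≠ j'), f k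
        = f j + ∑ k ∈ Finset.univ.filter (fun k => k ≠ j ∧ k ≠ j'), f k := by
    intro f
    have hset : Finset.univ.filter (fun k : Fin p => k ≠ j')
        = insert j (Finset.univ.filter (fun k => k ≠ j ∧ k ≠ j')) := by
      ext k; simp only [Finset.mem_filter, Finset.mem_insert, Finset.mem_univ, true_and]
      constructor
      · intro hk; by_cases h : k = j
        · exact Or.inl h
        · exact Or.inr ⟨h, hk⟩
      · rintro (rfl | ⟨_, h2⟩)
        · exact hne
        · exact h2
    rw [hset, Finset.sum_insert (by simp)]
  set S := ∑ k ∈ Finset.univ.filter (fun k => k ≠ j), |Θ j k| with hS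
  set S' := ∑ k ∈ Finset.univ.filter (fun k => k ≠ j'), |Θ j' k| with hS'
  -- S' = S
  have hSS : S' = S := by
    rw [hS, hS', split1, split2]
    congr 1
    · rw [hsym]
    · apply Finset.sum_congr rfl
      intro k hk
      simp only [Finset.mem_filter] at hk
      rw [hrepl k hk.2.1 hk.2.2, abs_neg]
  -- cross sums
  have hC1 : ∑ k ∈ Finset.univ.filter (fun k => k ≠ j), Θ j k * b k
      = Θ j j' * b j' + ∑ k ∈ Finset.univ.filter (fun k => k ≠ j ∧ k ≠ j'), Θ j k * b k :=
    split1 _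
  have hC2 : ∑ k ∈ Finset.univ.filter (fun k => k ≠ j'), Θ j' k * b k
      = Θ j j' * b j - ∑ k ∈ Finset.univ.filter (fun k => k ≠ j ∧ k ≠ j'), Θ j k * b k := by
    rw [split2]
    have : ∑ k ∈ Finset.univ.filter (fun k => k ≠ j ∧ k ≠ j'), Θ j' k * b k
        = -∑ k ∈ Finset.univ.filter (fun k => k ≠ j ∧ k ≠ j'), Θ j k * b k := by
      rw [← Finset.sum_neg_distrib]
      apply Finset.sum_congr rfl
      intro k hk
      simp only [Finset.mem_filter] at hk
      rw [hrepl k hk.2.1 hk.2.2]; ring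
    rw [this, hsym]; ring
  have h1 := hKKT j hbj
  have h2 := hKKT j' hbj'
  rw [← hS', hSS, hC2] at h2
  rw [← hS, hC1] at h1
  -- add
  have hsum : ∑ i, (X i j + X i j') * (y i - X.mulVec b i)
      = (∑ i, X i j * (y i - X.mulVec b i)) + ∑ i, X i j' * (y i - X.mulVec b i) := by
    rw [← Finset.sum_add_distrib]
    apply Finset.sum_congr rfl
    intro i _; ring
  have key : ∑ i, (X i j + X i j') * (y i - X.mulVec b i)
      = lam2 * (S - Θ j j') * (b j + b j') := by
    rw [hsum]
    have := hsign
    nlinarith [h1, h2]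
  have hSpos : 0 < lam2 * (S - Θ j j') := by
    have hSge : |Θ j j'| ≤ S := by
      rw [hS, split1]
      have : 0 ≤ ∑ k ∈ Finset.univ.filter (fun k => k ≠ j ∧ k ≠ j'), |Θ j k| :=
        Finset.sum_nonneg fun k _ => abs_nonneg _
      linarith
    have : 0 < S - Θ j j' := by
      have := abs_nonneg (Θ j j'); nlinarith [le_abs_self (Θ j j'), neg_abs_le (Θ j j')]
    positivity
  rw [key, abs_mul, abs_of_pos hSpos]
  field_simp
  exact (mul_div_cancel_right₀ _ (ne_of_gt (by nlinarith))).symm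
end

section
/- Let β̂^en be a stationary point of the elastic net objective, i.e. for each j with β̂^en_j ≠ 0: −X_j^T(y − Xβ̂^en) + λ₁ sign(β̂^en_j) + λ₂ β̂^en_j = 0. If β̂^en_j ≠ 0, β̂^en_{j'} ≠ 0 and sign(β̂^en_j) = sign(β̂^en_{j'}), then |β̂^en_j − β̂^en_{j'}| = (1/λ₂)|(X_j − X_{j'})^T z^en| where z^en = y − Xβ̂^en. -/
open Finset Matrix

/-- Grouping effect of the elastic net: at a stationary point `b` of the elastic net
objective, if `b_j ≠ 0`, `b_{j'} ≠ 0` and `sign(b_j) = sign(b_{j'})`, then with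
`z = y - Xb`, `|b_j - b_{j'}| = (1/λ₂)|(X_j - X_{j'})ᵀ z|`. -/
theorem elasticnet_grouping {n p : ℕ}
    (y : Fin n → ℝ) (X : Matrix (Fin n) (Fin p) ℝ)
    (lam1 lam2 : ℝ) (hlam1 : 0 ≤ lam1) (hlam2 : 0 < lam2)
    (b : Fin p → ℝ)
    (hKKT : ∀ l, b l ≠ 0 →
      -(∑ i, X i l * (y i - X.mulVec b i)) + lam1 * Real.sign (b l) + lam2 * b l = 0)
    (j j' : Fin p) (hbj : b j ≠ 0) (hbj' : b j' ≠ 0)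
    (hsign : Real.sign (b j) = Real.sign (b j')) :
    |b j - b j'| = (1 / lam2) * |∑ i, (X i j - X i j') * (y i - X.mulVec b i)| := by
  have h1 := hKKT j hbj
  have h2 := hKKT j' hbj'
  have key : lam2 * (b j - b j') = ∑ i, (X i j - X i j') * (y i - X.mulVec b i) := by
    have := sub_eq_zero.mpr (h1.trans h2.symm)
    rw [hsign] at this
    have hsum : ∑ i, (X i j - X i j') * (y i - X.mulVec b i)
        = (∑ i, X i j * (y i - X.mulVec b i)) - ∑ i, X i j' * (y i - X.mulVec b i) := by
      rw [← Finset.sum_sub_distrib]; congr 1; ext i; ring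
    rw [hsum]; linarith
  have : |lam2 * (b j - b j')| = |∑ i, (X i j - X i j') * (y i - X.mulVec b i)| := by
    rw [key]
  rw [abs_mul, abs_of_pos hlam2] at this
  field_simp
  linarith
end

section
/- Sign recovery via KKT: suppose β has support S with sign vector sign(β_S), and there exists β̂ with β̂_{S^c} = 0 satisfying (i) (X_S^T X_S + λ₂Γ̂_S)β̂_S − X_S^T X_S β_S − X_S^T ε = −λ₁ sign(β_S), (ii) |(X_{S^c}^T X_S + λ₂Γ̂_{S^c})β̂_S − X_{S^c}^T X_S β_S − X_{S^c}^T ε| ≤ λ₁ coordinatewise, and (iii) |β̂_S − β_S| < |β_S| coordinatewise. Then β̂ is a global minimizer of the SLS-GLE objective (with y = Xβ + ε) and sign(β̂) = sign(β). -/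
open Finset Matrix

/-- Sign recovery via KKT (Lemma 4 step): with `y = Xβ + ε`, `S = supp(β)`, if `β̂`
vanishes off `S` and satisfies (i) the stationarity equation on `S` with subgradient
`sign(β_S)`, (ii) the dual feasibility bound off `S`, and (iii) `|β̂_S − β_S| < |β_S|`
coordinatewise, then `β̂` is a global minimizer of the SLS-GLE objective and
`sign(β̂) = sign(β)`. -/
theorem slsgle_sign_recovery {n p : ℕ}
    (X : Matrix (Fin n) (Fin p) ℝ) (β : Fin p → ℝ) (ε : Fin n → ℝ)
    (Γ : Matrix (Fin p) (Fin p) ℝ) (hΓ : Γ.PosSemidef)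
    (lam1 lam2 : ℝ) (hlam1 : 0 < lam1) (hlam2 : 0 ≤ lam2)
    (bhat : Fin p → ℝ)
    (hsupp : ∀ j, β j = 0 → bhat j = 0)
    -- (i) stationarity on `S` (using `β̂_{Sᶜ} = 0`, the `S`-block equations read
    -- `(XᵀXβ̂ + λ₂Γ̂β̂ − XᵀXβ − Xᵀε)_j = −λ₁ sign(β_j)` for `j ∈ S`)
    (hi : ∀ j, β j ≠ 0 →
      (Xᵀ * X).mulVec bhat j + lam2 * Γ.mulVec bhat j -
          (Xᵀ * X).mulVec β j - Xᵀ.mulVec ε j = -lam1 * Real.sign (β j))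
    -- (ii) dual feasibility off `S`
    (hii : ∀ j, β j = 0 →
      |(Xᵀ * X).mulVec bhat j + lam2 * Γ.mulVec bhat j -
          (Xᵀ * X).mulVec β j - Xᵀ.mulVec ε j| ≤ lam1)
    -- (iii)
    (hiii : ∀ j, β j ≠ 0 → |bhat j - β j| < |β j|) :
    (∀ b : Fin p → ℝ,
      (1 / 2) * ∑ i, ((X.mulVec β + ε) i - X.mulVec bhat i) ^ 2 +
          lam1 * ∑ j, |bhat j| + (lam2 / 2) * (bhat ⬝ᵥ Γ.mulVec bhat) ≤
        (1 / 2) * ∑ i, ((X.mulVec β + ε) i - X.mulVec b i) ^ 2 +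
          lam1 * ∑ j, |b j| + (lam2 / 2) * (b ⬝ᵥ Γ.mulVec b)) ∧
    (∀ j, Real.sign (bhat j) = Real.sign (β j)) := by
  have hsign : ∀ j, Real.sign (bhat j) = Real.sign (β j) := by
    intro j
    by_cases h : β j = 0
    · simp [hsupp j h, h]
    · rcases lt_or_gt_of_ne h with hneg | hpos
      · have habs := hiii j h
        rw [abs_of_neg hneg] at habs
        have h1 : bhat j < 0 := by
          rcases abs_lt.mp habs with ⟨h2, h3⟩; linarith
        rw [Real.sign_of_neg h1, Real.sign_of_neg hneg]
      · have habs := hiii j h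
        rw [abs_of_pos hpos] at habs
        have h1 : 0 < bhat j := by
          rcases abs_lt.mp habs with ⟨h2, h3⟩; linarith
        rw [Real.sign_of_pos h1, Real.sign_of_pos hpos]
  refine ⟨?_, hsign⟩
  intro b
  have hGsym : Γᵀ = Γ := (by simpa using hΓ.1 : Γ.IsSymm)
  have hPSD : ∀ v : Fin p → ℝ, 0 ≤ v ⬝ᵥ Γ.mulVec v := fun v => by simpa using hΓ.dotProduct_mulVec_nonneg v
  have hswap : ∀ u v : Fin p → ℝ, u ⬝ᵥ Γ.mulVec v = v ⬝ᵥ Γ.mulVec u := by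
    intro u v
    rw [Matrix.dotProduct_mulVec, ← Matrix.mulVec_transpose, hGsym, dotProduct_comm]
  set y : Fin n → ℝ := X.mulVec β + ε with hy
  set d : Fin p → ℝ := b - bhat with hdd
  set g : Fin p → ℝ := fun j => (Xᵀ * X).mulVec bhat j + lam2 * Γ.mulVec bhat j -
      (Xᵀ * X).mulVec β j - Xᵀ.mulVec ε j with hg
  -- coordinatewise KKT inequality
  have hcoord : ∀ j, 0 ≤ g j * d j + lam1 * (|b j| - |bhat j|) := by
    intro j
    by_cases h : β j = 0
    · have hb0 : bhat j = 0 := hsupp j h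
      have hgb : |g j| ≤ lam1 := hii j h
      have h1 : -(|g j| * |b j|) ≤ g j * b j := by
        rw [← abs_mul]; exact neg_abs_le _
      have h2 : |g j| * |b j| ≤ lam1 * |b j| :=
        mul_le_mul_of_nonneg_right hgb (abs_nonneg _)
      simp only [hdd, Pi.sub_apply, hb0, sub_zero, abs_zero]
      linarith [h1, h2]
    · have hgj : g j = -lam1 * Real.sign (β j) := hi j h
      have habs := hiii j h
      rcases lt_or_gt_of_ne h with hneg | hpos
      · rw [abs_of_neg hneg] at habs
        have h1 : bhat j < 0 := by rcases abs_lt.mp habs with ⟨h2, h3⟩; linarith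
        have hs : Real.sign (β j) = -1 := Real.sign_of_neg hneg
        have hdj : d j = b j - bhat j := rfl
        have habsb : -|b j| ≤ b j := neg_abs_le _
        rw [hgj, hs, hdj, abs_of_neg h1]
        nlinarith
      · rw [abs_of_pos hpos] at habs
        have h1 : 0 < bhat j := by rcases abs_lt.mp habs with ⟨h2, h3⟩; linarith
        have hs : Real.sign (β j) = 1 := Real.sign_of_pos hpos
        have hdj : d j = b j - bhat j := rfl
        have habsb : b j ≤ |b j| := le_abs_self _
        rw [hgj, hs, hdj, abs_of_pos h1]
        nlinarith
  have hC : 0 ≤ ∑ j, (g j * d j + lam1 * (|b j| - |bhat j|)) :=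
    Finset.sum_nonneg fun j _ => hcoord j
  -- expansion of the residual term
  have hmb : X.mulVec b = X.mulVec bhat + X.mulVec d := by
    rw [hdd, Matrix.mulVec_sub]; abel
  have hsq : ∑ i, (y i - X.mulVec b i) ^ 2 =
      ∑ i, (y i - X.mulVec bhat i) ^ 2 + ∑ i, (X.mulVec d i) ^ 2
        - 2 * ∑ i, (y i - X.mulVec bhat i) * X.mulVec d i := by
    have h1 : ∀ i, (y i - X.mulVec b i) ^ 2 =
        (y i - X.mulVec bhat i) ^ 2 + (X.mulVec d i) ^ 2
          - 2 * ((y i - X.mulVec bhat i) * X.mulVec d i) := by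
      intro i
      rw [hmb]
      simp only [Pi.add_apply]
      ring
    rw [Finset.sum_congr rfl fun i _ => h1 i, Finset.sum_sub_distrib,
      Finset.sum_add_distrib, ← Finset.mul_sum]
  -- the cross term as a dot product over j
  have hcross : ∑ i, (y i - X.mulVec bhat i) * X.mulVec d i =
      ∑ j, ((Xᵀ * X).mulVec β j + Xᵀ.mulVec ε j - (Xᵀ * X).mulVec bhat j) * d j := by
    have h1 : ∑ i, (y i - X.mulVec bhat i) * X.mulVec d i
        = (y - X.mulVec bhat) ⬝ᵥ X.mulVec d := rfl
    rw [h1, Matrix.dotProduct_mulVec, ← Matrix.mulVec_transpose]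
    have h2 : Xᵀ.mulVec (y - X.mulVec bhat) =
        fun j => (Xᵀ * X).mulVec β j + Xᵀ.mulVec ε j - (Xᵀ * X).mulVec bhat j := by
      funext j
      rw [hy]
      have : (X.mulVec β + ε) - X.mulVec bhat = X.mulVec β + ε - X.mulVec bhat := rfl
      rw [Matrix.mulVec_sub, Matrix.mulVec_add, Matrix.mulVec_mulVec]
      simp
    rw [h2]
    rfl
  -- expansion of the quadratic form
  have hquad : b ⬝ᵥ Γ.mulVec b = bhat ⬝ᵥ Γ.mulVec bhat + d ⬝ᵥ Γ.mulVec d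
      + 2 * ∑ j, Γ.mulVec bhat j * d j := by
    have hb : b = bhat + d := by rw [hdd]; abel
    have h2 : Γ.mulVec bhat ⬝ᵥ d = ∑ j, Γ.mulVec bhat j * d j := rfl
    have h3 : bhat ⬝ᵥ Γ.mulVec d = ∑ j, Γ.mulVec bhat j * d j := by
      rw [Matrix.dotProduct_mulVec, ← Matrix.mulVec_transpose, hGsym]; rfl
    rw [hb, Matrix.mulVec_add, add_dotProduct, dotProduct_add,
      dotProduct_add, hswap d bhat, h3]
    ring
  -- sum of g over coordinates
  have hgsum : ∑ j, g j * d j =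
      lam2 * ∑ j, Γ.mulVec bhat j * d j
      - ∑ j, ((Xᵀ * X).mulVec β j + Xᵀ.mulVec ε j - (Xᵀ * X).mulVec bhat j) * d j := by
    rw [Finset.mul_sum, ← Finset.sum_sub_distrib]
    refine Finset.sum_congr rfl fun j _ => ?_
    simp only [hg]
    ring
  have hXd : 0 ≤ ∑ i, (X.mulVec d i) ^ 2 :=
    Finset.sum_nonneg fun i _ => sq_nonneg _
  have hdd2 : 0 ≤ d ⬝ᵥ Γ.mulVec d := hPSD d
  have hCsplit : ∑ j, (g j * d j + lam1 * (|b j| - |bhat j|)) =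
      ∑ j, g j * d j + lam1 * ∑ j, |b j| - lam1 * ∑ j, |bhat j| := by
    have hsplit2 : ∑ j, lam1 * (|b j| - |bhat j|) =
        lam1 * ∑ j, |b j| - lam1 * ∑ j, |bhat j| := by
      rw [Finset.mul_sum, Finset.mul_sum, ← Finset.sum_sub_distrib]
      exact Finset.sum_congr rfl fun j _ => by ring
    rw [Finset.sum_add_distrib, hsplit2]
    ring
  rw [hCsplit, hgsum] at hC
  rw [hsq, hcross, hquad]
  linarith [hC, hXd, hdd2, mul_nonneg hlam2 hdd2]
end
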